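/- Let (T, ≤) be a partially ordered set equipped with an order-preserving bijection S : T → T whose induced ℤ-action is free with finitely many orbits. Assume t < S t for all t ∈ T, and that for any t < t' there exists n ≥ 0 with t' < Sⁿ t. Then for any a ≤ b in T, the interval {t ∈ T : a ≤ t ≤ b} is finite. -/

import Mathlib

/-- under the PHW axioms on a poset `T` with shift `S`, every interval `[a, b]`
is finite. -/
theorem stmt_7 (T : Type*) [PartialOrder T] (S : Equiv.Perm T)
    (hmono : ∀ t t' : T, t ≤ t' ↔ S t ≤ S t')
    (hfree : ∀ (n : ℤ) (t : T), (S ^ n) t = t → n = 0)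
    (horb : {s : Set T | ∃ t : T, s = {t' : T | ∃ n : ℤ, (S ^ n) t = t'}}.Finite)
    (hlt : ∀ t : T, t < S t)
    (hcof : ∀ t t' : T, t < t' → ∃ n : ℕ, t' < (S ^ n) t) :
    ∀ a b : T, a ≤ b → {t : T | a ≤ t ∧ t ≤ b}.Finite := by
  intro a b hab
  -- powers of S preserve the order
  have key : ∀ n : ℤ, ∀ t t' : T, t ≤ t' ↔ (S ^ n) t ≤ (S ^ n) t' := by
    intro n
    induction n using Int.induction_on with
    | zero => simp
    | succ k ih =>
      intro t t'
      have h1 : ∀ x : T, (S ^ ((k : ℤ) + 1)) x = (S ^ (k : ℤ)) (S x) := by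
        intro x
        rw [zpow_add_one]
        rfl
      rw [h1, h1, ← ih (S t) (S t'), ← hmono]
    | pred k ih =>
      intro t t'
      have h1 : ∀ x : T, (S ^ (-(k : ℤ) - 1)) x = (S ^ (-(k : ℤ))) (S⁻¹ x) := by
        intro x
        rw [zpow_sub_one]
        rfl
      have h2 : t ≤ t' ↔ S⁻¹ t ≤ S⁻¹ t' := by
        have := hmono (S⁻¹ t) (S⁻¹ t')
        simp at this
        exact this.symm
      rw [h1, h1, ← ih (S⁻¹ t) (S⁻¹ t'), ← h2]
  have keylt : ∀ n : ℤ, ∀ t t' : T, t < t' ↔ (S ^ n) t < (S ^ n) t' := by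
    intro n t t'
    rw [lt_iff_le_not_ge, lt_iff_le_not_ge, key n t t', key n t' t]
  -- growth : t < S^k t for k ≥ 1
  have grow : ∀ k : ℕ, 1 ≤ k → ∀ t : T, t < (S ^ (k : ℤ)) t := by
    intro k hk
    induction k, hk using Nat.le_induction with
    | base => intro t; simpa using hlt t
    | succ m hm ih =>
      intro t
      have h1 : (S ^ ((m : ℤ) + 1)) t = (S ^ (m : ℤ)) (S t) := by
        rw [zpow_add_one]; rfl
      have h2 : t < (S ^ ((m : ℤ) + 1)) t := by
        calc t < S t := hlt t
          _ < (S ^ (m : ℤ)) (S t) := ih (S t)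
          _ = (S ^ ((m : ℤ) + 1)) t := h1.symm
      have h3 : ((m + 1 : ℕ) : ℤ) = (m : ℤ) + 1 := by push_cast; ring
      rwa [h3]
  -- strict monotonicity in the exponent
  have strict : ∀ m n : ℤ, m < n → ∀ t : T, (S ^ m) t < (S ^ n) t := by
    intro m n hmn t
    have hk : (1 : ℤ) ≤ n - m := by omega
    have hk' : ((n - m).toNat : ℤ) = n - m := Int.toNat_of_nonneg (by omega)
    have h1 : t < (S ^ (n - m)) t := by
      have := grow (n - m).toNat (by omega) t
      rwa [hk'] at this
    have h2 : (S ^ m) t < (S ^ m) ((S ^ (n - m)) t) := (keylt m _ _).mp h1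
    have h3 : (S ^ m) ((S ^ (n - m)) t) = (S ^ n) t := by
      rw [← Equiv.Perm.mul_apply, ← zpow_add]
      congr 1
      ring
    rwa [h3] at h2
  have exp_le : ∀ m n : ℤ, ∀ t : T, (S ^ m) t ≤ (S ^ n) t → m ≤ n := by
    intro m n t h
    by_contra hc
    exact absurd (lt_of_lt_of_le (strict n m (by omega) t) h) (lt_irrefl _)
  -- boundedness lemma
  have bdd : ∀ u v : T, ∃ M : ℤ, ∀ n : ℤ, (S ^ n) u ≤ v → n ≤ M := by
    intro u v
    by_cases h : ∃ n₀ : ℤ, (S ^ n₀) u ≤ v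
    · obtain ⟨n₀, h₀⟩ := h
      have h1 : (S ^ n₀) u < S v := lt_of_le_of_lt h₀ (hlt v)
      obtain ⟨k, hk⟩ := hcof _ _ h1
      have h2 : (S ^ (k : ℕ)) ((S ^ n₀) u) = (S ^ (n₀ + (k : ℤ))) u := by
        rw [← zpow_natCast S k, ← Equiv.Perm.mul_apply, ← zpow_add]
        congr 1
        ring
      refine ⟨n₀ + (k : ℤ), fun n hn => ?_⟩
      have h3 : (S ^ n) u < (S ^ (n₀ + (k : ℤ))) u := by
        calc (S ^ n) u ≤ v := hn
          _ < S v := hlt v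
          _ < (S ^ (k : ℕ)) ((S ^ n₀) u) := hk
          _ = (S ^ (n₀ + (k : ℤ))) u := h2
      exact exp_le n (n₀ + (k : ℤ)) u h3.le
    · exact ⟨0, fun n hn => absurd ⟨n, hn⟩ h⟩
  -- each orbit meets the interval in a finite set
  have piece : ∀ t : T,
      ({t' : T | ∃ n : ℤ, (S ^ n) t = t'} ∩ {t' : T | a ≤ t' ∧ t' ≤ b}).Finite := by
    intro t
    obtain ⟨M₁, hM₁⟩ := bdd t b
    obtain ⟨M₂, hM₂⟩ := bdd a t
    have hsub : ({t' : T | ∃ n : ℤ, (S ^ n) t = t'} ∩ {t' : T | a ≤ t' ∧ t' ≤ b}) ⊆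
        (fun n : ℤ => (S ^ n) t) '' (Set.Icc (-M₂) M₁) := by
      rintro x ⟨⟨n, rfl⟩, hax, hxb⟩
      refine ⟨n, ⟨?_, hM₁ n hxb⟩, rfl⟩
      have h1 : (S ^ (-n)) a ≤ (S ^ (-n)) ((S ^ n) t) := (key (-n) a _).mp hax
      have h2 : (S ^ (-n)) ((S ^ n) t) = t := by
        rw [← Equiv.Perm.mul_apply, ← zpow_add]
        simp
      rw [h2] at h1
      have := hM₂ (-n) h1
      omega
    exact ((Set.finite_Icc (-M₂) M₁).image _).subset hsub
  -- conclude using finitely many orbits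
  have hcover : {t : T | a ≤ t ∧ t ≤ b} ⊆
      ⋃ s ∈ {s : Set T | ∃ t : T, s = {t' : T | ∃ n : ℤ, (S ^ n) t = t'}},
        (s ∩ {t' : T | a ≤ t' ∧ t' ≤ b}) := by
    intro y hy
    refine Set.mem_biUnion (x := {t' : T | ∃ n : ℤ, (S ^ n) y = t'}) ⟨y, rfl⟩ ?_
    exact ⟨⟨0, by simp⟩, hy⟩
  refine Set.Finite.subset ?_ hcover
  refine horb.biUnion ?_
  rintro s ⟨t, rfl⟩
  exact piece t
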